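/- Let a be a real number with a ∉ {0, 1, 2}, and let n ≥ 3 be an integer. Then (a/(a−1))^{n−3} + Σ_{k=1}^{n−2} (a/(a−1))^{n−2−k} · ( (a−3−k)/(a−2) + (2ak+a−k−2)/(a(a−1)(a−2)) ) = (n−2) + ( 1 + (n−(n−1)a)/(a(a−2)) ), where all exponents are natural numbers. -/

import Mathlib

/-- Auxiliary identity: for real `a ∉ {0,1,2}` and `n ≥ 3`,
`(a/(a-1))^(n-3) + Σ_{k=1}^{n-2} (a/(a-1))^(n-2-k)
((a-3-k)/(a-2) + (2ak+a-k-2)/(a(a-1)(a-2))) = (n-2) + (1 + (n-(n-1)a)/(a(a-2)))`. -/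
theorem auxiliary_identity_a_Kn_minus_edge (a : ℝ)
    (ha0 : a ≠ 0) (ha1 : a ≠ 1) (ha2 : a ≠ 2) (n : ℕ) (hn : 3 ≤ n) :
    (a / (a - 1)) ^ (n - 3) +
        ∑ k ∈ Finset.Icc 1 (n - 2),
          (a / (a - 1)) ^ (n - 2 - k) *
            ((a - 3 - (k : ℝ)) / (a - 2) +
              (2 * a * (k : ℝ) + a - (k : ℝ) - 2) / (a * (a - 1) * (a - 2))) =
      ((n : ℝ) - 2) + (1 + ((n : ℝ) - ((n : ℝ) - 1) * a) / (a * (a - 2))) := by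
  have h1 : a - 1 ≠ 0 := sub_ne_zero.mpr ha1
  have h2 : a - 2 ≠ 0 := sub_ne_zero.mpr ha2
  induction n, hn using Nat.le_induction with
  | base =>
    norm_num [Finset.Icc_self]
    field_simp
    ring
  | succ n hn IH =>
    have h3 : (n + 1) - 3 = (n - 3) + 1 := by omega
    have h2' : (n + 1) - 2 = (n - 2) + 1 := by omega
    rw [h3, h2']
    rw [Finset.sum_Icc_succ_top (by omega : 1 ≤ (n - 2) + 1)]
    have hterm : ∀ k ∈ Finset.Icc 1 (n - 2),
        (a / (a - 1)) ^ (n - 2 + 1 - k) *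
            ((a - 3 - (k : ℝ)) / (a - 2) +
              (2 * a * (k : ℝ) + a - (k : ℝ) - 2) / (a * (a - 1) * (a - 2)))
        = (a / (a - 1)) * ((a / (a - 1)) ^ (n - 2 - k) *
            ((a - 3 - (k : ℝ)) / (a - 2) +
              (2 * a * (k : ℝ) + a - (k : ℝ) - 2) / (a * (a - 1) * (a - 2)))) := by
      intro k hk
      rw [Finset.mem_Icc] at hk
      have hk' : n - 2 + 1 - k = (n - 2 - k) + 1 := by omega
      rw [hk', pow_succ]
      ring
    rw [Finset.sum_congr rfl hterm, ← Finset.mul_sum, pow_succ]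
    have hsum := eq_sub_of_add_eq' IH
    rw [hsum]
    have hc : ((n - 2 + 1 : ℕ) : ℝ) = (n : ℝ) - 1 := by
      have h1n : n - 2 + 1 = n - 1 := by omega
      rw [h1n, Nat.cast_sub (by omega : 1 ≤ n)]
      norm_num
    rw [hc]
    push_cast
    field_simp
    simp only [Nat.sub_self, pow_zero, mul_one, one_mul]
    ring
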